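/- For the hypercube Q_n with n ≥ 2 even, aw(Q_n,3) = 3: every surjective 3-coloring of the vertices of Q_n contains a rainbow 3-AP. -/

import Mathlib

namespace AntiVDW

/-- `v 0, v 1, …, v (k-1)` is a `k`-term arithmetic progression in `G`:
consecutive vertices are at a common finite distance `d`. -/
def IsAPSeq {V : Type*} (G : SimpleGraph V) (k : ℕ) (v : ℕ → V) : Prop :=
  ∃ d : ℕ, ∀ i, i + 1 < k → G.Reachable (v i) (v (i + 1)) ∧ G.dist (v i) (v (i + 1)) = d

/-- `G` contains a `k`-AP that is rainbow under the coloring `c`. -/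
def HasRainbowAP {V α : Type*} (G : SimpleGraph V) (k : ℕ) (c : V → α) : Prop :=
  ∃ v : ℕ → V, IsAPSeq G k v ∧ ∀ i j, i < k → j < k → i ≠ j → c (v i) ≠ c (v j)

/-- The anti-van der Waerden number: the least positive `r` such that every
exact (surjective) `r`-coloring of `G` contains a rainbow `k`-AP. -/
noncomputable def aw {V : Type*} (G : SimpleGraph V) (k : ℕ) : ℕ :=
  sInf {r : ℕ | 0 < r ∧ ∀ c : V → Fin r, Function.Surjective c → HasRainbowAP G k c}

/-- Eccentricity of a vertex. -/
noncomputable def ecc {V : Type*} [Fintype V] (G : SimpleGraph V) (v : V) : ℕ :=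
  Finset.univ.sup fun u => G.dist v u

/-- Radius of a graph. -/
noncomputable def rad {V : Type*} [Fintype V] [Nonempty V] (G : SimpleGraph V) : ℕ :=
  Finset.univ.inf' Finset.univ_nonempty (ecc G)

/-- Diameter of a graph. -/
noncomputable def diam {V : Type*} [Fintype V] (G : SimpleGraph V) : ℕ :=
  Finset.univ.sup (ecc G)

/-- The `n`-dimensional hypercube. -/
def hypercube (n : ℕ) : SimpleGraph (Fin n → Bool) where
  Adj x y := hammingDist x y = 1
  symm := ⟨fun x y h => by simpa [hammingDist_comm] using h⟩
  loopless := ⟨fun x h => by simp [hammingDist_self] at h⟩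

open Finset
open scoped symmDiff

/-! ### Hamming / flip toolbox -/

variable {N : ℕ}

/-- Flip the coordinates in `s`. -/
def flip (s : Finset (Fin N)) (v : Fin N → Bool) : Fin N → Bool :=
  fun i => if i ∈ s then !(v i) else v i

lemma bool_ne_iff {a b : Bool} : a ≠ b ↔ (!a) = b := by revert a b; decide

lemma flip_apply_mem {s : Finset (Fin N)} {v : Fin N → Bool} {i : Fin N} (h : i ∈ s) :
    flip s v i = !(v i) := if_pos h

lemma flip_apply_not_mem {s : Finset (Fin N)} {v : Fin N → Bool} {i : Fin N} (h : i ∉ s) :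
    flip s v i = v i := if_neg h

lemma hammingDist_flip_flip (s t : Finset (Fin N)) (v : Fin N → Bool) :
    hammingDist (flip s v) (flip t v) = (s ∆ t).card := by
  show (Finset.univ.filter fun i => flip s v i ≠ flip t v i).card = _
  congr 1
  ext i
  by_cases hs : i ∈ s <;> by_cases ht : i ∈ t <;>
    simp only [Finset.mem_filter, Finset.mem_univ, true_and] <;>
    simp [flip, hs, ht, Finset.mem_symmDiff] <;> cases v i <;> decide

lemma hammingDist_flip (s : Finset (Fin N)) (v : Fin N → Bool) :
    hammingDist v (flip s v) = s.card := by
  show (Finset.univ.filter fun i => v i ≠ flip s v i).card = _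
  congr 1
  ext i
  by_cases hs : i ∈ s <;> simp [flip, hs] <;> cases v i <;> decide

/-- coordinates where two vertices differ -/
def diffs (v w : Fin N → Bool) : Finset (Fin N) := Finset.univ.filter fun i => v i ≠ w i

lemma card_diffs (v w : Fin N → Bool) : (diffs v w).card = hammingDist v w := rfl

lemma flip_diffs (v w : Fin N → Bool) : flip (diffs v w) v = w := by
  funext i
  by_cases h : v i = w i
  · rw [flip_apply_not_mem (by simp [diffs, h])]; exact h
  · rw [flip_apply_mem (by simp [diffs, h])]; exact bool_ne_iff.mp h

lemma hammingDist_flip_univ_left (v w : Fin N → Bool) :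
    hammingDist (flip Finset.univ v) w = N - hammingDist v w := by
  show (Finset.univ.filter fun i => flip Finset.univ v i ≠ w i).card = _
  have : (Finset.univ.filter fun i => flip Finset.univ v i ≠ w i)
      = (Finset.univ.filter fun i => v i ≠ w i)ᶜ := by
    ext i
    simp [flip]
  rw [this, Finset.card_compl]
  simp [hammingDist]

lemma flip_univ_flip_univ (v : Fin N → Bool) : flip Finset.univ (flip Finset.univ v) = v := by
  funext i; simp [flip]

lemma hammingDist_flip_univ_right (v w : Fin N → Bool) :
    hammingDist v (flip Finset.univ w) = N - hammingDist v w := by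
  rw [hammingDist_comm, hammingDist_flip_univ_left, hammingDist_comm]

lemma hammingDist_le (v w : Fin N → Bool) : hammingDist v w ≤ N := by
  classical
  calc hammingDist v w = (diffs v w).card := rfl
  _ ≤ (Finset.univ : Finset (Fin N)).card := Finset.card_le_card (Finset.subset_univ _)
  _ = N := by simp

lemma eq_flip_univ_of_dist_eq (v w : Fin N → Bool) (h : hammingDist v w = N) :
    w = flip Finset.univ v := by
  have : diffs v w = Finset.univ := by
    apply Finset.eq_univ_of_card
    rw [card_diffs, h]; simp
  rw [← flip_diffs v w, this]

lemma even_sum3 (x y z : Fin N → Bool) :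
    Even (hammingDist x y + hammingDist y z + hammingDist x z) := by
  classical
  have h : ∀ u w : Fin N → Bool, hammingDist u w
      = ∑ i : Fin N, (if u i ≠ w i then 1 else 0) := by
    intro u w
    rw [show hammingDist u w = (Finset.univ.filter fun i => u i ≠ w i).card from rfl,
      Finset.card_filter]
  rw [h, h, h, ← Finset.sum_add_distrib, ← Finset.sum_add_distrib]
  apply Finset.even_sum
  intro i _
  cases x i <;> cases y i <;> cases z i <;> decide

lemma agr_card (v w : Fin N → Bool) :
    (Finset.univ.filter fun i => v i = w i).card = N - hammingDist v w := by
  have : (Finset.univ.filter fun i => v i = w i)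
      = (Finset.univ.filter fun i => v i ≠ w i)ᶜ := by
    ext i; simp
  rw [this, Finset.card_compl]
  simp [hammingDist]

lemma hammingDist_flip_single {x y : Fin N → Bool} {a : Fin N} (h : a ∈ diffs x y) :
    hammingDist (flip {a} x) y = hammingDist x y - 1 := by
  show (Finset.univ.filter fun i => flip {a} x i ≠ y i).card = _
  have : (Finset.univ.filter fun i => flip {a} x i ≠ y i) = (diffs x y).erase a := by
    ext i
    by_cases hia : i = a
    · subst hia
      have h' : (!(x i)) = y i := bool_ne_iff.mp (by simpa [diffs] using h)
      simp [flip_apply_mem (Finset.mem_singleton_self i), h']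
    · simp [flip, hia, diffs]
  rw [this, Finset.card_erase_of_mem h, card_diffs]

lemma hammingDist_flip_single_self (x : Fin N → Bool) (a : Fin N) :
    hammingDist x (flip {a} x) = 1 := by
  rw [hammingDist_flip]; simp

/-! ### symmDiff identities -/

lemma symmDiff_singleton_mem {a : Fin N} {S : Finset (Fin N)} (h : a ∈ S) :
    ({a} : Finset (Fin N)) ∆ S = S.erase a := by
  ext i
  by_cases hia : i = a <;> simp [Finset.mem_symmDiff, hia, h, Finset.mem_erase] <;> tauto

lemma symmDiff_singleton_not_mem {a : Fin N} {M : Finset (Fin N)} (h : a ∉ M) :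
    ({a} : Finset (Fin N)) ∆ M = insert a M := by
  ext i
  by_cases hia : i = a <;> simp [Finset.mem_symmDiff, hia, h] <;> tauto

lemma symmDiff_singleton_univ (a : Fin N) :
    ({a} : Finset (Fin N)) ∆ Finset.univ = Finset.univ.erase a := by
  ext i
  by_cases hia : i = a <;> simp [Finset.mem_symmDiff, hia]

lemma symmDiff_sdiff_pair {a g : Fin N} (hag : a ≠ g) :
    (Finset.univ \ ({a, g} : Finset (Fin N))) ∆ ({a} : Finset (Fin N))
      = Finset.univ.erase g := by
  ext i
  by_cases hia : i = a <;> by_cases hig : i = g <;>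
    simp [Finset.mem_symmDiff, hia, hig, hag] <;> tauto

/-! ### Fin 3 helpers -/

lemma f3_trichotomy (a b c t : Fin 3) (hab : a ≠ b) (hac : a ≠ c) (hbc : b ≠ c) :
    t = a ∨ t = b ∨ t = c := by revert a b c t; decide

lemma f3_third (a b : Fin 3) (h : a ≠ b) : ∃ t : Fin 3, t ≠ a ∧ t ≠ b := by
  revert a b; decide

lemma f2_no3 (a b c : Fin 2) (hab : a ≠ b) (hac : a ≠ c) (hbc : b ≠ c) : False := by
  revert a b c; decide

/-! ### bichromatic edge -/

lemma exists_bichromatic_edge (c : (Fin N → Bool) → Fin 3)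
    (h : ∃ u w, c u ≠ c w) : ∃ x y, hammingDist x y = 1 ∧ c x ≠ c y := by
  obtain ⟨u, w, hc⟩ := h
  suffices H : ∀ d (u w : Fin N → Bool), hammingDist u w = d → c u ≠ c w →
      ∃ x y, hammingDist x y = 1 ∧ c x ≠ c y by
    exact H _ u w rfl hc
  intro d
  induction d using Nat.strong_induction_on with
  | _ d IH =>
    intro u w hd hc
    have hd0 : d ≠ 0 := by
      intro h0; subst h0
      exact hc (by rw [hammingDist_eq_zero.mp hd])
    by_cases hd1 : d = 1
    · exact ⟨u, w, by rw [hd, hd1], hc⟩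
    · have hne : (diffs u w).Nonempty := by
        rw [← Finset.card_pos, card_diffs, hd]; omega
      obtain ⟨a, ha⟩ := hne
      have h1 : hammingDist u (flip {a} u) = 1 := hammingDist_flip_single_self u a
      have h2 : hammingDist (flip {a} u) w = d - 1 := by
        rw [hammingDist_flip_single ha, hd]
      by_cases hcu : c (flip {a} u) = c w
      · exact ⟨u, flip {a} u, h1, by rw [hcu]; exact hc⟩
      · exact IH (d-1) (by omega) _ w h2 hcu

/-! ### subcube -/

lemma subcube (m : ℕ) (i j : Fin (m+2)) (hij : i ≠ j) (u : Fin (m+2) → Bool) :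
    ∃ φ : (Fin m → Bool) → (Fin (m+2) → Bool),
      (∀ p q, hammingDist (φ p) (φ q) = hammingDist p q) ∧
      (∀ w, w i = u i → w j = u j → ∃ p, φ p = w) := by
  classical
  set s : Finset (Fin (m+2)) := ({i, j} : Finset (Fin (m+2)))ᶜ with hs
  have hcard : s.card = m := by
    rw [hs, Finset.card_compl, Finset.card_insert_of_notMem (by simp [hij]),
      Finset.card_singleton]
    simp
  set e : {x // x ∈ s} ≃ Fin m := s.equivFin.trans (finCongr hcard) with he
  have hmem : ∀ (p q : Fin m → Bool) (k : Fin (m+2)),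
      (if h : k ∈ s then p (e ⟨k, h⟩) else u k) ≠ (if h : k ∈ s then q (e ⟨k, h⟩) else u k) →
      k ∈ s := by
    intro p q k hk
    by_contra hks
    rw [dif_neg hks, dif_neg hks] at hk
    exact hk rfl
  refine ⟨fun p k => if h : k ∈ s then p (e ⟨k, h⟩) else u k, ?_, ?_⟩
  · intro p q
    show (Finset.univ.filter fun k => _ ≠ _).card = (Finset.univ.filter fun b => p b ≠ q b).card
    apply Finset.card_bij (fun k hk => e ⟨k, hmem p q k (by simpa using hk)⟩)
    · intro k hk
      simp only [Finset.mem_filter, Finset.mem_univ, true_and] at hk ⊢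
      have h := hmem p q k hk
      rw [dif_pos h, dif_pos h] at hk
      exact hk
    · intro k1 hk1 k2 hk2 hee
      have := congrArg (fun z => ((e.symm z : {x // x ∈ s}) : Fin (m+2))) hee
      simpa using this
    · intro b hb
      refine ⟨(e.symm b : {x // x ∈ s}), ?_, by simp⟩
      simp only [Finset.mem_filter, Finset.mem_univ, true_and] at hb ⊢
      rw [dif_pos (e.symm b).2, dif_pos (e.symm b).2]
      simpa using hb
  · intro w hwi hwj
    refine ⟨fun b => w ((e.symm b : {x // x ∈ s}) : Fin (m+2)), ?_⟩
    funext k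
    by_cases h : k ∈ s
    · simp only [dif_pos h]
      congr 1
      rw [e.symm_apply_apply]
    · simp only [dif_neg h]
      have hk : k = i ∨ k = j := by
        rw [hs] at h
        simp only [Finset.mem_compl, not_not, Finset.mem_insert, Finset.mem_singleton] at h
        exact h
      rcases hk with rfl | rfl
      · exact hwi.symm
      · exact hwj.symm

/-! ### main combinatorial notions -/

/-- no rainbow 3-AP (in terms of Hamming distance) -/
def NoRainbow (N : ℕ) (c : (Fin N → Bool) → Fin 3) : Prop :=
  ∀ x y z : Fin N → Bool, c x ≠ c y → c x ≠ c z → c y ≠ c z →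
    hammingDist x y ≠ hammingDist y z

/-- no rainbow triple agreeing on two coordinates -/
def NoQuarter (N : ℕ) (c : (Fin N → Bool) → Fin 3) : Prop :=
  ∀ x y z : Fin N → Bool, c x ≠ c y → c x ≠ c z → c y ≠ c z →
    ∀ i j : Fin N, i ≠ j → x i = y i → y i = z i → x j = y j → y j = z j → False

section MainLemmas

variable {c : (Fin N → Bool) → Fin 3}

lemma sphere_fact (hNR : NoRainbow N c) {p : Fin N → Bool}
    (hp : c p ≠ c (flip Finset.univ p)) {T : Fin 3}
    (hT1 : T ≠ c p) (hT2 : T ≠ c (flip Finset.univ p)) {x u : Fin N → Bool}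
    (hx : c x = T) (hu : hammingDist p u = hammingDist p x) : c u = T := by
  rcases f3_trichotomy (c p) (c (flip Finset.univ p)) T (c u) hp (fun h => hT1 h.symm)
    (fun h => hT2 h.symm) with h | h | h
  · -- c u = c p : use AP (u, pbar, x)
    exfalso
    apply hNR u (flip Finset.univ p) x
    · rw [h]; exact hp
    · rw [h, hx]; exact fun hh => hT1 hh.symm
    · rw [hx]; exact fun hh => hT2 hh.symm
    · rw [hammingDist_flip_univ_right, hammingDist_flip_univ_left,
        hammingDist_comm u p, hu]
  · -- c u = c pbar : use AP (u, p, x)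
    exfalso
    apply hNR u p x
    · rw [h]; exact fun hh => hp hh.symm
    · rw [h, hx]; exact fun hh => hT2 hh.symm
    · rw [hx]; exact fun hh => hT1 hh.symm
    · rw [hammingDist_comm u p, hu]
  · exact h

lemma mid_fact (hNR : NoRainbow N c) {p : Fin N → Bool}
    (hp : c p ≠ c (flip Finset.univ p)) {T : Fin 3}
    (hT1 : T ≠ c p) (hT2 : T ≠ c (flip Finset.univ p)) {x : Fin N → Bool}
    (hx : c x = T) : 2 * hammingDist p x ≠ N := by
  intro h2
  apply hNR p x (flip Finset.univ p)
  · rw [hx]; exact fun hh => hT1 hh.symm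
  · exact hp
  · rw [hx]; exact hT2
  · rw [hammingDist_flip_univ_right, hammingDist_comm x p]
    omega

lemma lemma_A (hNR : NoRainbow N c) (hMQ : NoQuarter N c) {p : Fin N → Bool}
    (hp : c p ≠ c (flip Finset.univ p)) {T : Fin 3}
    (hT1 : T ≠ c p) (hT2 : T ≠ c (flip Finset.univ p)) {x : Fin N → Bool}
    (hx : c x = T) (hN4 : 4 ≤ N) (hNe : Even N)
    (h2 : 2 ≤ hammingDist p x) (hlt : 2 * hammingDist p x < N) : False := by
  classical
  obtain ⟨h, hh⟩ := hNe
  set t := hammingDist p x with ht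
  -- a half-size set A and a t-subset B of it
  obtain ⟨A, -, hA⟩ := Finset.exists_subset_card_eq (s := (Finset.univ : Finset (Fin N))) (n := h)
    (by simp; omega)
  obtain ⟨B, hBA, hB⟩ := Finset.exists_subset_card_eq (s := A) (n := t) (by omega)
  set w := flip B p with hw
  set v := flip A p with hv
  have hcw : c w = T := sphere_fact hNR hp hT1 hT2 hx (by rw [hw, hammingDist_flip, hB])
  have hdv : hammingDist p v = h := by rw [hv, hammingDist_flip, hA]
  have hvT : c v ≠ T := by
    intro hvt
    exact mid_fact hNR hp hT1 hT2 hvt (by rw [hdv]; omega)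
  -- two coordinates inside B
  have hBtwo : ∃ i ∈ B, ∃ j ∈ B, i ≠ j := Finset.one_lt_card.mp (by omega)
  -- two coordinates outside A
  have hAc : 1 < Aᶜ.card := by
    rw [Finset.card_compl, hA]; simp; omega
  have hActwo : ∃ i ∈ Aᶜ, ∃ j ∈ Aᶜ, i ≠ j := Finset.one_lt_card.mp hAc
  rcases f3_trichotomy (c p) (c (flip Finset.univ p)) T (c v) hp (fun h' => hT1 h'.symm)
    (fun h' => hT2 h'.symm) with hcv | hcv | hcv
  · -- c v = c p : triple (w, v, pbar) agrees on B
    obtain ⟨i, hi, j, hj, hij⟩ := hBtwo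
    refine hMQ w v (flip Finset.univ p) ?_ ?_ ?_ i j hij ?_ ?_ ?_ ?_
    · rw [hcw, hcv]; exact hT1
    · rw [hcw]; exact hT2
    · rw [hcv]; exact hp
    · rw [hw, hv, flip_apply_mem hi, flip_apply_mem (hBA hi)]
    · rw [hv, flip_apply_mem (hBA hi), flip_apply_mem (Finset.mem_univ i)]
    · rw [hw, hv, flip_apply_mem hj, flip_apply_mem (hBA hj)]
    · rw [hv, flip_apply_mem (hBA hj), flip_apply_mem (Finset.mem_univ j)]
  · -- c v = c pbar : triple (w, v, p) agrees outside A
    obtain ⟨i, hi, j, hj, hij⟩ := hActwo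
    rw [Finset.mem_compl] at hi hj
    refine hMQ w v p ?_ ?_ ?_ i j hij ?_ ?_ ?_ ?_
    · rw [hcw, hcv]; exact hT2
    · rw [hcw]; exact hT1
    · rw [hcv]; exact fun h' => hp h'.symm
    · rw [hw, hv, flip_apply_not_mem (fun hc => hi (hBA hc)), flip_apply_not_mem hi]
    · rw [hv, flip_apply_not_mem hi]
    · rw [hw, hv, flip_apply_not_mem (fun hc => hj (hBA hc)), flip_apply_not_mem hj]
    · rw [hv, flip_apply_not_mem hj]
  · exact hvT hcv

lemma lemma_B (hNR : NoRainbow N c) (hMQ : NoQuarter N c) {p : Fin N → Bool}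
    (hp : c p ≠ c (flip Finset.univ p)) {T : Fin 3}
    (hT1 : T ≠ c p) (hT2 : T ≠ c (flip Finset.univ p))
    (hall : ∀ x, c x = T → hammingDist p x = 1 ∨ hammingDist p x = N - 1)
    {x₀ : Fin N → Bool} (hx₀ : c x₀ = T) (hd₀ : hammingDist p x₀ = 1)
    (hN4 : 4 ≤ N) (hNe : Even N) : False := by
  classical
  obtain ⟨a, ha⟩ : ∃ a, diffs p x₀ = {a} :=
    Finset.card_eq_one.mp (by rw [card_diffs, hd₀])
  have hx₀flip : x₀ = flip {a} p := by rw [← flip_diffs p x₀, ha]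
  -- (i)
  have claim1 : ∀ z', c z' = c (flip Finset.univ p) → N - 2 ≤ hammingDist p z' := by
    intro z' hz'
    by_contra hlt
    push_neg at hlt
    set agr := Finset.univ.filter (fun i => p i = z' i) with hagr
    have hagrcard : agr.card = N - hammingDist p z' := agr_card p z'
    have h2 : 1 < (agr.erase a).card := by
      have := Finset.pred_card_le_card_erase (a := a) (s := agr)
      omega
    obtain ⟨i, hi, j, hj, hij⟩ := Finset.one_lt_card.mp h2
    rw [Finset.mem_erase] at hi hj
    have hia : i ∉ ({a} : Finset (Fin N)) := by simp [hi.1]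
    have hja : j ∉ ({a} : Finset (Fin N)) := by simp [hj.1]
    have hiagr : p i = z' i := by simpa [hagr] using hi.2
    have hjagr : p j = z' j := by simpa [hagr] using hj.2
    refine hMQ x₀ p z' ?_ ?_ ?_ i j hij ?_ hiagr ?_ hjagr
    · rw [hx₀]; exact hT1
    · rw [hx₀, hz']; exact hT2
    · rw [hz']; exact hp
    · rw [hx₀flip, flip_apply_not_mem hia]
    · rw [hx₀flip, flip_apply_not_mem hja]
  -- (ii)
  have claim2 : ∀ z', c z' = c (flip Finset.univ p) → hammingDist p z' ≠ N - 2 := by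
    intro z' hz' hd
    set S := diffs p z' with hS
    have hScard : S.card = N - 2 := by rw [hS, card_diffs, hd]
    have hSne : S.Nonempty := by rw [← Finset.card_pos, hScard]; omega
    obtain ⟨a', ha'⟩ := hSne
    set x₁ := flip {a'} p with hx₁
    have hcx₁ : c x₁ = T := sphere_fact hNR hp hT1 hT2 hx₀
      (by rw [hx₁, hammingDist_flip, Finset.card_singleton, hd₀])
    have hz'flip : z' = flip S p := by rw [hS, flip_diffs]
    have hdx₁z' : hammingDist x₁ z' = N - 3 := by
      rw [hx₁, hz'flip, hammingDist_flip_flip, symmDiff_singleton_mem ha',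
        Finset.card_erase_of_mem ha', hScard]
      omega
    have hN46 : N = 4 ∨ 6 ≤ N := by
      obtain ⟨h, hh⟩ := hNe; omega
    rcases hN46 with hN | hN
    · -- N = 4 : direct rainbow AP (z', x₁, p)
      apply hNR z' x₁ p
      · rw [hz', hcx₁]; exact fun h' => hT2 h'.symm
      · rw [hz']; exact fun h' => hp h'.symm
      · rw [hcx₁]; exact hT1
      · rw [hammingDist_comm z' x₁, hdx₁z', hammingDist_comm x₁ p, hx₁,
          hammingDist_flip, Finset.card_singleton, hN]
    · -- N ≥ 6
      obtain ⟨M', hM'sub, hM'⟩ := Finset.exists_subset_card_eq (s := Finset.univ.erase a') (n := N - 4)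
        (by rw [Finset.card_erase_of_mem (Finset.mem_univ a')]; simp; omega)
      set v := flip M' p with hv
      have hdv : hammingDist p v = N - 4 := by rw [hv, hammingDist_flip, hM']
      have hvT : c v ≠ T := by
        intro h'
        rcases hall v h' with h'' | h'' <;> omega
      have hvpbar : c v ≠ c (flip Finset.univ p) := by
        intro h'
        have := claim1 v h'
        omega
      have hcv : c v = c p := by
        rcases f3_trichotomy (c p) (c (flip Finset.univ p)) T (c v) hp
          (fun h' => hT1 h'.symm) (fun h' => hT2 h'.symm) with h' | h' | h'
        · exact h'
        · exact absurd h' hvpbar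
        · exact absurd h' hvT
      have ha'M' : a' ∉ M' := fun hc => by
        have := hM'sub hc; simp at this
      have hdx₁v : hammingDist x₁ v = N - 3 := by
        rw [hx₁, hv, hammingDist_flip_flip, symmDiff_singleton_not_mem ha'M',
          Finset.card_insert_of_notMem ha'M', hM']
        omega
      apply hNR v x₁ z'
      · rw [hcv, hcx₁]; exact fun h' => hT1 h'.symm
      · rw [hcv, hz']; exact hp
      · rw [hcx₁, hz']; exact hT2
      · rw [hammingDist_comm v x₁, hdx₁v, hdx₁z']
  -- (iii) final contradiction
  obtain ⟨g, hg⟩ : (Finset.univ.erase a).Nonempty := by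
    rw [← Finset.card_pos, Finset.card_erase_of_mem (Finset.mem_univ a)]
    simp; omega
  rw [Finset.mem_erase] at hg
  have hga : g ≠ a := hg.1
  set v := flip (Finset.univ \ ({a, g} : Finset (Fin N))) p with hv
  have hdv : hammingDist p v = N - 2 := by
    rw [hv, hammingDist_flip, Finset.card_sdiff_of_subset (Finset.subset_univ _),
      Finset.card_pair (fun h' => hga h'.symm)]
    simp
  have hvT : c v ≠ T := by
    intro h'
    rcases hall v h' with h'' | h'' <;> omega
  have hvpbar : c v ≠ c (flip Finset.univ p) := fun h' => claim2 v h' hdv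
  have hcv : c v = c p := by
    rcases f3_trichotomy (c p) (c (flip Finset.univ p)) T (c v) hp
      (fun h' => hT1 h'.symm) (fun h' => hT2 h'.symm) with h' | h' | h'
    · exact h'
    · exact absurd h' hvpbar
    · exact absurd h' hvT
  apply hNR v x₀ (flip Finset.univ p)
  · rw [hcv, hx₀]; exact fun h' => hT1 h'.symm
  · rw [hcv]; exact hp
  · rw [hx₀]; exact hT2
  · rw [hx₀flip, hv, hammingDist_flip_flip, symmDiff_sdiff_pair hga.symm,
      Finset.card_erase_of_mem (Finset.mem_univ g)]
    have : flip Finset.univ p = flip Finset.univ p := rfl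
    rw [show (flip Finset.univ p) = flip Finset.univ p from rfl]
    rw [hammingDist_flip_flip, symmDiff_singleton_univ,
      Finset.card_erase_of_mem (Finset.mem_univ a)]

end MainLemmas

/-! ### the core theorem -/

lemma base_case : ∀ c : (Fin 2 → Bool) → Fin 3, Function.Surjective c → ¬ NoRainbow 2 c := by
  have h : ∀ c : (Fin 2 → Bool) → Fin 3, (∀ b, ∃ a, c a = b) →
      ¬(∀ x y z : Fin 2 → Bool, c x ≠ c y → c x ≠ c z → c y ≠ c z →
        hammingDist x y ≠ hammingDist y z) := by decide
  intro c hs hnr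
  exact h c (fun b => hs b) hnr

theorem core : ∀ n, 2 ≤ n → Even n → ∀ c : (Fin n → Bool) → Fin 3,
    Function.Surjective c → ¬ NoRainbow n c := by
  intro n
  induction n using Nat.strong_induction_on with
  | _ n IH =>
    intro hn2 hne c hsurj hNR
    obtain ⟨m, rfl⟩ : ∃ m, n = m + 2 := ⟨n - 2, by omega⟩
    rcases Nat.eq_zero_or_pos m with hm | hm
    · subst hm
      exact base_case c hsurj hNR
    · have hme : Even m := by
        rcases hne with ⟨k, hk⟩; exact ⟨k - 1, by omega⟩
      have hm2 : 2 ≤ m := by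
        rcases hme with ⟨k, hk⟩; omega
      -- NoQuarter from the induction hypothesis
      have hMQ : NoQuarter (m+2) c := by
        intro x y z hxy hxz hyz i j hij h1 h2 h3 h4
        obtain ⟨φ, hiso, hsurjq⟩ := subcube m i j hij x
        obtain ⟨px, hpx⟩ := hsurjq x rfl rfl
        obtain ⟨py, hpy⟩ := hsurjq y h1.symm h3.symm
        obtain ⟨pz, hpz⟩ := hsurjq z (h1.trans h2).symm (h3.trans h4).symm
        have hsurj' : Function.Surjective (c ∘ φ) := by
          intro t
          rcases f3_trichotomy (c x) (c y) (c z) t hxy hxz hyz with h | h | h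
          · exact ⟨px, by simp [hpx, h]⟩
          · exact ⟨py, by simp [hpy, h]⟩
          · exact ⟨pz, by simp [hpz, h]⟩
        apply IH m (by omega) hm2 hme (c ∘ φ) hsurj'
        intro x' y' z' h1' h2' h3'
        have h5 := hNR (φ x') (φ y') (φ z') h1' h2' h3'
        rw [hiso, hiso] at h5
        exact h5
      by_cases hanti : ∃ v, c v ≠ c (flip Finset.univ v)
      · -- an antipodal bichromatic pair exists
        obtain ⟨p, hp⟩ := hanti
        obtain ⟨T, hT1, hT2⟩ := f3_third (c p) (c (flip Finset.univ p)) hp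
        obtain ⟨xw, hxw⟩ := hsurj T
        have hpbar : c (flip Finset.univ p) ≠ c (flip Finset.univ (flip Finset.univ p)) := by
          rw [flip_univ_flip_univ]; exact hp.symm
        have hT2' : T ≠ c (flip Finset.univ (flip Finset.univ p)) := by
          rw [flip_univ_flip_univ]; exact hT1
        have hall : ∀ x, c x = T →
            hammingDist p x = 1 ∨ hammingDist p x = (m+2) - 1 := by
          intro x hx
          have h0 : hammingDist p x ≠ 0 := by
            intro h0
            exact hT1 (by rw [← hx, hammingDist_eq_zero.mp h0])
          have hNtop : hammingDist p x ≠ m + 2 := by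
            intro htop
            exact hT2 (by rw [← hx, eq_flip_univ_of_dist_eq p x htop])
          have hmid : 2 * hammingDist p x ≠ m + 2 := mid_fact hNR hp hT1 hT2 hx
          have hle : hammingDist p x ≤ m + 2 := hammingDist_le p x
          have hA1 : ¬(2 ≤ hammingDist p x ∧ 2 * hammingDist p x < m + 2) := by
            rintro ⟨u1, u2⟩
            exact lemma_A hNR hMQ hp hT1 hT2 hx (by omega) hne u1 u2
          have hA2 : ¬(2 ≤ hammingDist (flip Finset.univ p) x ∧
              2 * hammingDist (flip Finset.univ p) x < m + 2) := by
            rintro ⟨u1, u2⟩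
            exact lemma_A hNR hMQ hpbar hT2 hT2' hx (by omega) hne u1 u2
          have hdbar : hammingDist (flip Finset.univ p) x
              = m + 2 - hammingDist p x := hammingDist_flip_univ_left p x
          omega
        by_cases hex1 : ∃ x, c x = T ∧ hammingDist p x = 1
        · obtain ⟨x₀, hx₀, hd₀⟩ := hex1
          exact lemma_B hNR hMQ hp hT1 hT2 hall hx₀ hd₀ (by omega) hne
        · push_neg at hex1
          have hdw : hammingDist p xw = (m+2) - 1 := by
            rcases hall xw hxw with h | h
            · exact absurd h (hex1 xw hxw)
            · exact h
          have hd1 : hammingDist (flip Finset.univ p) xw = 1 := by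
            rw [hammingDist_flip_univ_left, hdw]; omega
          have hall' : ∀ x, c x = T → hammingDist (flip Finset.univ p) x = 1 ∨
              hammingDist (flip Finset.univ p) x = (m+2) - 1 := by
            intro x hx
            rcases hall x hx with h | h <;> rw [hammingDist_flip_univ_left, h]
            · right; omega
            · left; omega
          exact lemma_B hNR hMQ hpbar hT2 hT2' hall' hxw hd1 (by omega) hne
      · -- all antipodal pairs are monochromatic
        push_neg at hanti
        obtain ⟨u0, hu0⟩ := hsurj 0
        obtain ⟨u1, hu1⟩ := hsurj 1
        obtain ⟨x, y, hexy, hcxy⟩ := exists_bichromatic_edge c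
          ⟨u0, u1, by rw [hu0, hu1]; decide⟩
        obtain ⟨T, hTx, hTy⟩ := f3_third (c x) (c y) hcxy
        obtain ⟨z, hz⟩ := hsurj T
        obtain ⟨a, ha⟩ : ∃ a, diffs x y = {a} :=
          Finset.card_eq_one.mp (by rw [card_diffs, hexy])
        have hyflip : y = flip {a} x := by rw [← flip_diffs x y, ha]
        have hclaim : ∀ z', c z' = T →
            m ≤ hammingDist x z' ∧ m ≤ hammingDist y z' := by
          intro z' hz'
          constructor
          · by_contra hlt
            push_neg at hlt
            have hagrcard : (Finset.univ.filter fun i => x i = z' i).card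
                = (m+2) - hammingDist x z' := agr_card x z'
            have h2 : 1 < ((Finset.univ.filter fun i => x i = z' i).erase a).card := by
              have := Finset.pred_card_le_card_erase (a := a)
                (s := Finset.univ.filter fun i => x i = z' i)
              omega
            obtain ⟨i, hi, j, hj, hij⟩ := Finset.one_lt_card.mp h2
            rw [Finset.mem_erase, Finset.mem_filter] at hi hj
            have hxyi : x i = y i := by
              rw [hyflip, flip_apply_not_mem (by simp [hi.1])]
            have hxyj : x j = y j := by
              rw [hyflip, flip_apply_not_mem (by simp [hj.1])]
            refine hMQ x y z' hcxy (by rw [hz']; exact fun h' => hTx h'.symm)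
              (by rw [hz']; exact fun h' => hTy h'.symm) i j hij hxyi ?_ hxyj ?_
            · rw [← hxyi]; exact hi.2.2
            · rw [← hxyj]; exact hj.2.2
          · by_contra hlt
            push_neg at hlt
            have hagrcard : (Finset.univ.filter fun i => y i = z' i).card
                = (m+2) - hammingDist y z' := agr_card y z'
            have h2 : 1 < ((Finset.univ.filter fun i => y i = z' i).erase a).card := by
              have := Finset.pred_card_le_card_erase (a := a)
                (s := Finset.univ.filter fun i => y i = z' i)
              omega
            obtain ⟨i, hi, j, hj, hij⟩ := Finset.one_lt_card.mp h2
            rw [Finset.mem_erase, Finset.mem_filter] at hi hj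
            have hxyi : x i = y i := by
              rw [hyflip, flip_apply_not_mem (by simp [hi.1])]
            have hxyj : x j = y j := by
              rw [hyflip, flip_apply_not_mem (by simp [hj.1])]
            exact hMQ x y z' hcxy (by rw [hz']; exact fun h' => hTx h'.symm)
              (by rw [hz']; exact fun h' => hTy h'.symm) i j hij hxyi hi.2.2 hxyj hj.2.2
        have hzbar : c (flip Finset.univ z) = T := by rw [← hanti z]; exact hz
        have h1 := hclaim z hz
        have h2 := hclaim (flip Finset.univ z) hzbar
        rw [hammingDist_flip_univ_right, hammingDist_flip_univ_right] at h2
        have hlex : hammingDist x z ≤ m + 2 := hammingDist_le x z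
        have hley : hammingDist y z ≤ m + 2 := hammingDist_le y z
        have hxz2 : hammingDist x z = 2 ∧ hammingDist y z = 2 ∧ m = 2 := by omega
        have hev := even_sum3 x y z
        rw [hexy, hxz2.1, hxz2.2.1] at hev
        rcases hev with ⟨k, hk⟩
        omega

end AntiVDW
namespace AntiVDW

/-! ### graph distance vs Hamming distance -/

lemma hypercube_adj {n : ℕ} {x y : Fin n → Bool} (h : hammingDist x y = 1) :
    (hypercube n).Adj x y := h

lemma hypercube_walk {n : ℕ} : ∀ (d : ℕ) (x y : Fin n → Bool), hammingDist x y = d →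
    ∃ w : (hypercube n).Walk x y, w.length = d := by
  intro d
  induction d with
  | zero =>
    intro x y h
    have : x = y := hammingDist_eq_zero.mp h
    subst this
    exact ⟨SimpleGraph.Walk.nil, rfl⟩
  | succ d IHd =>
    intro x y h
    have hne : (diffs x y).Nonempty := by
      rw [← Finset.card_pos, card_diffs, h]; omega
    obtain ⟨a, ha⟩ := hne
    have hadj : (hypercube n).Adj x (flip {a} x) :=
      hypercube_adj (hammingDist_flip_single_self x a)
    have hd : hammingDist (flip {a} x) y = d := by
      rw [hammingDist_flip_single ha, h]; omega
    obtain ⟨w, hw⟩ := IHd (flip {a} x) y hd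
    exact ⟨SimpleGraph.Walk.cons hadj w, by simp [hw]⟩

lemma hypercube_reachable {n : ℕ} (x y : Fin n → Bool) : (hypercube n).Reachable x y := by
  obtain ⟨w, -⟩ := hypercube_walk (hammingDist x y) x y rfl
  exact ⟨w⟩

lemma hamming_le_walk_length {n : ℕ} {x y : Fin n → Bool} (w : (hypercube n).Walk x y) :
    hammingDist x y ≤ w.length := by
  induction w with
  | nil => simp [hammingDist_self]
  | @cons u v z hadj q IHq =>
    have h1 : hammingDist u v = 1 := hadj
    calc hammingDist u z ≤ hammingDist u v + hammingDist v z := hammingDist_triangle u v z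
    _ ≤ 1 + q.length := by rw [h1]; omega
    _ = (SimpleGraph.Walk.cons hadj q).length := by simp [Nat.add_comm]

lemma hypercube_dist {n : ℕ} (x y : Fin n → Bool) :
    (hypercube n).dist x y = hammingDist x y := by
  apply le_antisymm
  · obtain ⟨w, hw⟩ := hypercube_walk (hammingDist x y) x y rfl
    calc (hypercube n).dist x y ≤ w.length := SimpleGraph.dist_le w
    _ = hammingDist x y := hw
  · obtain ⟨w, hw⟩ := (hypercube_reachable x y).exists_walk_length_eq_dist
    calc hammingDist x y ≤ w.length := hamming_le_walk_length w
    _ = (hypercube n).dist x y := hw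

/-- build a rainbow 3-AP from a rainbow equal-distance triple -/
lemma build_rainbow {n : ℕ} {α : Type*} (c : (Fin n → Bool) → α) (x y z : Fin n → Bool)
    (hxy : c x ≠ c y) (hxz : c x ≠ c z) (hyz : c y ≠ c z)
    (hd : hammingDist x y = hammingDist y z) : HasRainbowAP (hypercube n) 3 c := by
  refine ⟨fun i => if i = 0 then x else if i = 1 then y else z, ⟨hammingDist x y, ?_⟩, ?_⟩
  · intro i hi
    have hi' : i = 0 ∨ i = 1 := by omega
    rcases hi' with rfl | rfl
    · norm_num
      exact ⟨hypercube_reachable x y, hypercube_dist x y⟩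
    · norm_num
      refine ⟨hypercube_reachable y z, ?_⟩
      rw [hypercube_dist y z, hd]
  · intro i j hi hj hij
    interval_cases i <;> interval_cases j <;> simp_all <;> first
      | exact hxy | exact hxz | exact hyz
      | exact fun h' => hxy h'.symm | exact fun h' => hxz h'.symm
      | exact fun h' => hyz h'.symm

theorem stmt_12 (n : ℕ) (hn : 2 ≤ n) (heven : Even n) :
    aw (hypercube n) 3 = 3 := by
  have h3 : (3 : ℕ) ∈ {r : ℕ | 0 < r ∧ ∀ c : (Fin n → Bool) → Fin r,
      Function.Surjective c → HasRainbowAP (hypercube n) 3 c} := by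
    refine ⟨by norm_num, ?_⟩
    intro c hc
    have hcore := core n hn heven c hc
    unfold NoRainbow at hcore
    push_neg at hcore
    obtain ⟨x, y, z, hxy, hxz, hyz, hd⟩ := hcore
    exact build_rainbow c x y z hxy hxz hyz hd
  have hle : ∀ r ∈ {r : ℕ | 0 < r ∧ ∀ c : (Fin n → Bool) → Fin r,
      Function.Surjective c → HasRainbowAP (hypercube n) 3 c}, 3 ≤ r := by
    rintro r ⟨hr0, hr⟩
    by_contra hlt
    push_neg at hlt
    interval_cases r
    · -- r = 1
      have hs : Function.Surjective (fun _ : Fin n → Bool => (0 : Fin 1)) := by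
        intro b
        exact ⟨fun _ => false, Subsingleton.elim _ _⟩
      obtain ⟨v, -, hcol⟩ := hr _ hs
      exact hcol 0 1 (by norm_num) (by norm_num) (by norm_num) (Subsingleton.elim _ _)
    · -- r = 2
      set c2 : (Fin n → Bool) → Fin 2 :=
        fun v => if v = (fun _ => false) then 0 else 1 with hc2
      have hs : Function.Surjective c2 := by
        intro b
        match b with
        | 0 => exact ⟨fun _ => false, by simp [hc2]⟩
        | 1 =>
          refine ⟨fun _ => true, ?_⟩
          rw [hc2]
          simp only []
          rw [if_neg]
          intro h'
          have := congrFun h' ⟨0, by omega⟩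
          simp at this
      obtain ⟨v, -, hcol⟩ := hr c2 hs
      exact f2_no3 (c2 (v 0)) (c2 (v 1)) (c2 (v 2))
        (hcol 0 1 (by norm_num) (by norm_num) (by norm_num))
        (hcol 0 2 (by norm_num) (by norm_num) (by norm_num))
        (hcol 1 2 (by norm_num) (by norm_num) (by norm_num))
  exact le_antisymm (Nat.sInf_le h3) (le_csInf ⟨3, h3⟩ hle)

end AntiVDW
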